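/- In a conic idempotent residuated lattice, an element x is central (commutes with every element) if and only if x^ℓ = x^r. -/
import Mathlib


/-- In a conic idempotent residuated lattice, `x` is central iff `x^ℓ = x^r`. -/
theorem stmt2 {A : Type*} [Lattice A] [Monoid A]
    (ld rd : A → A → A)
    (resl : ∀ x y z : A, x * y ≤ z ↔ y ≤ ld x z)
    (resr : ∀ x y z : A, x * y ≤ z ↔ x ≤ rd z y)
    (conic : ∀ a : A, a ≤ 1 ∨ 1 ≤ a)
    (idem : ∀ x : A, x * x = x) :
    ∀ x : A, (∀ y : A, x * y = y * x) ↔ rd 1 x = ld x 1 := by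
  -- monotonicity of multiplication
  have mull : ∀ p q r : A, p ≤ q → p * r ≤ q * r := by
    intro p q r h
    have h1 : q ≤ rd (q * r) r := (resr q r (q * r)).1 le_rfl
    exact (resr p r (q * r)).2 (le_trans h h1)
  have mulr : ∀ p q r : A, p ≤ q → r * p ≤ r * q := by
    intro p q r h
    have h1 : q ≤ ld r (r * q) := (resl r q (r * q)).1 le_rfl
    exact (resl r p (r * q)).2 (le_trans h h1)
  -- negatives multiply as meet
  have negmul : ∀ p q : A, p ≤ 1 → q ≤ 1 → p * q = p ⊓ q := by
    intro p q hp hq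
    refine le_antisymm (le_inf ?_ ?_) ?_
    · calc p * q ≤ p * 1 := mulr q 1 p hq
        _ = p := mul_one p
    · calc p * q ≤ 1 * q := mull p 1 q hp
        _ = q := one_mul q
    · calc p ⊓ q = (p ⊓ q) * (p ⊓ q) := (idem _).symm
        _ ≤ p * q := le_trans (mull _ p _ inf_le_left) (mulr _ q p inf_le_right)
  -- positives multiply as join
  have posmul : ∀ p q : A, 1 ≤ p → 1 ≤ q → p * q = p ⊔ q := by
    intro p q hp hq
    refine le_antisymm ?_ (sup_le ?_ ?_)
    · calc p * q ≤ (p ⊔ q) * (p ⊔ q) :=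
          le_trans (mull p _ q le_sup_left) (mulr q _ _ le_sup_right)
        _ = p ⊔ q := idem _
    · calc p = p * 1 := (mul_one p).symm
        _ ≤ p * q := mulr 1 q p hq
    · calc q = 1 * q := (one_mul q).symm
        _ ≤ p * q := mull 1 p q hp
  -- for negative p : p * (p\1) = p
  have nr : ∀ p : A, p ≤ 1 → p * ld p 1 = p := by
    intro p hp
    have hn1 : p * ld p 1 ≤ 1 := (resl p (ld p 1) 1).2 le_rfl
    have h1 : (1 : A) ≤ ld p 1 := (resl p 1 1).1 (by rw [mul_one]; exact hp)
    have h2 : p ≤ p * ld p 1 := by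
      calc p = p * 1 := (mul_one p).symm
        _ ≤ p * ld p 1 := mulr 1 _ p h1
    have h3 : p * (p * ld p 1) = p := by
      rw [negmul p (p * ld p 1) hp hn1]; exact inf_eq_left.2 h2
    calc p * ld p 1 = (p * p) * ld p 1 := by rw [idem]
      _ = p * (p * ld p 1) := mul_assoc _ _ _
      _ = p := h3
  -- for negative p : (1/p) * p = p
  have nl : ∀ p : A, p ≤ 1 → rd 1 p * p = p := by
    intro p hp
    have hn1 : rd 1 p * p ≤ 1 := (resr (rd 1 p) p 1).2 le_rfl
    have h1 : (1 : A) ≤ rd 1 p := (resr 1 p 1).1 (by rw [one_mul]; exact hp)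
    have h2 : p ≤ rd 1 p * p := by
      calc p = 1 * p := (one_mul p).symm
        _ ≤ rd 1 p * p := mull 1 _ p h1
    have h3 : (rd 1 p * p) * p = p := by
      rw [negmul (rd 1 p * p) p hn1 hp]; exact inf_eq_right.2 h2
    calc rd 1 p * p = rd 1 p * (p * p) := by rw [idem]
      _ = (rd 1 p * p) * p := (mul_assoc _ _ _).symm
      _ = p := h3
  -- for positive p : p * (p\1) = p\1
  have pr : ∀ p : A, 1 ≤ p → p * ld p 1 = ld p 1 := by
    intro p hp
    refine le_antisymm ?_ ?_
    · refine (resl p (p * ld p 1) 1).1 ?_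
      calc p * (p * ld p 1) = (p * p) * ld p 1 := (mul_assoc _ _ _).symm
        _ = p * ld p 1 := by rw [idem]
        _ ≤ 1 := (resl p (ld p 1) 1).2 le_rfl
    · calc ld p 1 = 1 * ld p 1 := (one_mul _).symm
        _ ≤ p * ld p 1 := mull 1 p _ hp
  -- for positive p : (1/p) * p = 1/p
  have pl : ∀ p : A, 1 ≤ p → rd 1 p * p = rd 1 p := by
    intro p hp
    refine le_antisymm ?_ ?_
    · refine (resr (rd 1 p * p) p 1).1 ?_
      calc (rd 1 p * p) * p = rd 1 p * (p * p) := mul_assoc _ _ _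
        _ = rd 1 p * p := by rw [idem]
        _ ≤ 1 := (resr (rd 1 p) p 1).2 le_rfl
    · calc rd 1 p = rd 1 p * 1 := (mul_one _).symm
        _ ≤ rd 1 p * p := mulr 1 p _ hp
  -- negativity of the duals of positives
  have ldneg : ∀ p : A, 1 ≤ p → ld p 1 ≤ 1 := by
    intro p hp
    calc ld p 1 = 1 * ld p 1 := (one_mul _).symm
      _ ≤ p * ld p 1 := mull 1 p _ hp
      _ ≤ 1 := (resl p (ld p 1) 1).2 le_rfl
  have rdneg : ∀ p : A, 1 ≤ p → rd 1 p ≤ 1 := by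
    intro p hp
    calc rd 1 p = rd 1 p * 1 := (mul_one _).symm
      _ ≤ rd 1 p * p := mulr 1 p _ hp
      _ ≤ 1 := (resr (rd 1 p) p 1).2 le_rfl
  -- mixed products that are positive
  have posfact1 : ∀ p q : A, p ≤ 1 → 1 ≤ q → 1 ≤ p * q → p * q = q := by
    intro p q hp hq h
    refine le_antisymm ?_ ?_
    · calc p * q ≤ 1 * q := mull p 1 q hp
        _ = q := one_mul q
    · calc q = 1 * q := (one_mul q).symm
        _ ≤ (p * q) * q := mull 1 _ q h
        _ = p * (q * q) := mul_assoc _ _ _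
        _ = p * q := by rw [idem]
  have posfact2 : ∀ p q : A, p ≤ 1 → 1 ≤ q → 1 ≤ q * p → q * p = q := by
    intro p q hp hq h
    refine le_antisymm ?_ ?_
    · calc q * p ≤ q * 1 := mulr p 1 q hp
        _ = q := mul_one q
    · calc q = q * 1 := (mul_one q).symm
        _ ≤ q * (q * p) := mulr 1 _ q h
        _ = (q * q) * p := (mul_assoc _ _ _).symm
        _ = q * p := by rw [idem]
  -- key lemma for negative x
  have key : ∀ p q : A, p ≤ 1 → 1 ≤ q → rd 1 p = ld p 1 → p * q = q * p := by
    intro p q hp hq he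
    have A1 : p * q ≤ 1 → p * q = q * p := by
      intro h
      have hq1 : q ≤ ld p 1 := (resl p q 1).1 h
      have hq2 : q ≤ rd 1 p := he ▸ hq1
      have e1 : p * q = p := by
        refine le_antisymm ?_ ?_
        · calc p * q ≤ p * ld p 1 := mulr q _ p hq1
            _ = p := nr p hp
        · calc p = p * 1 := (mul_one p).symm
            _ ≤ p * q := mulr 1 q p hq
      have e2 : q * p = p := by
        refine le_antisymm ?_ ?_
        · calc q * p ≤ rd 1 p * p := mull q _ p hq2
            _ = p := nl p hp
        · calc p = 1 * p := (one_mul p).symm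
            _ ≤ q * p := mull 1 q p hq
      rw [e1, e2]
    rcases conic (p * q) with h | h
    · exact A1 h
    · rcases conic (q * p) with h2 | h2
      · have hq2 : q ≤ rd 1 p := (resr q p 1).1 h2
        exact A1 ((resl p q 1).2 (he ▸ hq2))
      · rw [posfact1 p q hp hq h, posfact2 p q hp hq h2]
  -- key lemma for positive x
  have key2 : ∀ p q : A, 1 ≤ p → q ≤ 1 → rd 1 p = ld p 1 → p * q = q * p := by
    intro p q hp hq he
    have A1 : q * p ≤ 1 → p * q = q * p := by
      intro h
      have hq1 : q ≤ rd 1 p := (resr q p 1).1 h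
      have hq2 : q ≤ ld p 1 := he ▸ hq1
      have habs1 : q * rd 1 p = q := by
        rw [negmul q (rd 1 p) hq (rdneg p hp)]; exact inf_eq_left.2 hq1
      have habs2 : ld p 1 * q = q := by
        rw [negmul (ld p 1) q (ldneg p hp) hq]; exact inf_eq_right.2 hq2
      have e1 : q * p = q := by
        calc q * p = (q * rd 1 p) * p := by rw [habs1]
          _ = q * (rd 1 p * p) := mul_assoc _ _ _
          _ = q * rd 1 p := by rw [pl p hp]
          _ = q := habs1
      have e2 : p * q = q := by
        calc p * q = p * (ld p 1 * q) := by rw [habs2]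
          _ = (p * ld p 1) * q := (mul_assoc _ _ _).symm
          _ = ld p 1 * q := by rw [pr p hp]
          _ = q := habs2
      rw [e1, e2]
    rcases conic (q * p) with h | h
    · exact A1 h
    · rcases conic (p * q) with h2 | h2
      · have hq1 : q ≤ ld p 1 := (resl p q 1).1 h2
        exact A1 ((resr q p 1).2 (by rw [he]; exact hq1))
      · rw [posfact1 q p hq hp h, posfact2 q p hq hp h2]
  intro x
  constructor
  · intro hc
    refine le_antisymm ?_ ?_
    · refine (resl x (rd 1 x) 1).1 ?_
      rw [hc (rd 1 x)]
      exact (resr (rd 1 x) x 1).2 le_rfl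
    · refine (resr (ld x 1) x 1).1 ?_
      rw [← hc (ld x 1)]
      exact (resl x (ld x 1) 1).2 le_rfl
  · intro he y
    rcases conic x with hx | hx
    · rcases conic y with hy | hy
      · rw [negmul x y hx hy, negmul y x hy hx, inf_comm]
      · exact key x y hx hy he
    · rcases conic y with hy | hy
      · exact key2 x y hx hy he
      · rw [posmul x y hx hy, posmul y x hy hx, sup_comm]
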